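/- For every integer r and every non-negative integer n, Σ_{j=0}^{2n−1} (−1)^{j(r+1)} F_{r(2n−2j−1)} = Σ_{j=0}^{n−1} (F_r/2)^{2j} 5^j F_{r(2n−2j−1)} + Σ_{j=1}^{n} (F_r/2)^{2j−1} 5^{j−1} L_{r(2n−2j)}, and the common value of these expressions equals 2·F_{2rn}/L_r (note that L_r ≠ 0 for every integer r). -/

import Mathlib

open Finset

/-- Integer-indexed Fibonacci numbers: `fibZ n = F n`, with
`F (-n) = (-1)^(n+1) * F n`. -/
def fibZ (n : ℤ) : ℤ :=
  if 0 ≤ n then (Nat.fib n.toNat : ℤ) else (-1) ^ (n.natAbs + 1) * (Nat.fib n.natAbs : ℤ)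

/-- Integer-indexed Lucas numbers: `lucZ n = L n = F (n+1) + F (n-1)`. -/
def lucZ (n : ℤ) : ℤ := fibZ (n + 1) + fibZ (n - 1)

lemma fibZ_coe (k : ℕ) : fibZ (k : ℤ) = (Nat.fib k : ℤ) := by
  simp [fibZ]

lemma fibZ_neg_coe (k : ℕ) : fibZ (-(k : ℤ)) = (-1) ^ (k + 1) * (Nat.fib k : ℤ) := by
  rcases Nat.eq_zero_or_pos k with rfl | hk
  · simp [fibZ]
  · rw [fibZ, if_neg (by omega)]
    simp

lemma fibZ_rec (n : ℤ) : fibZ (n + 2) = fibZ (n + 1) + fibZ n := by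
  obtain ⟨m, rfl | rfl⟩ := Int.eq_nat_or_neg n
  · have h1 : (m : ℤ) + 2 = ((m + 2 : ℕ) : ℤ) := by push_cast; ring
    have h2 : (m : ℤ) + 1 = ((m + 1 : ℕ) : ℤ) := by push_cast; ring
    rw [h1, h2, fibZ_coe, fibZ_coe, fibZ_coe, Nat.fib_add_two]
    push_cast; ring
  · match m with
    | 0 => norm_num [fibZ]; decide
    | 1 => norm_num [fibZ]
    | (m + 2) =>
      have h1 : -((m + 2 : ℕ) : ℤ) + 2 = -(m : ℤ) := by push_cast; ring
      have h2 : -((m + 2 : ℕ) : ℤ) + 1 = -((m + 1 : ℕ) : ℤ) := by push_cast; ring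
      rw [h1, h2, fibZ_neg_coe, fibZ_neg_coe, fibZ_neg_coe, Nat.fib_add_two]
      push_cast; ring

lemma fibZ_zero : fibZ 0 = 0 := by simp [fibZ]
lemma fibZ_one : fibZ 1 = 1 := by decide
lemma fibZ_two : fibZ 2 = 1 := by decide
lemma fibZ_neg_one : fibZ (-1) = 1 := by decide

lemma lucZ_zero : lucZ 0 = 2 := by decide
lemma lucZ_one : lucZ 1 = 1 := by decide

lemma lucZ_rec (n : ℤ) : lucZ (n + 2) = lucZ (n + 1) + lucZ n := by
  unfold lucZ
  have h1 := fibZ_rec (n + 1)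
  have h2 := fibZ_rec (n - 1)
  rw [show n + 2 + 1 = n + 1 + 2 from by ring, show n + 2 - 1 = n + 1 from by ring,
      show n + 1 - 1 = n from by ring]
  rw [show n - 1 + 2 = n + 1 from by ring, show n - 1 + 1 = n from by ring] at h2
  linear_combination h1 + h2

lemma add_formulas (m : ℤ) : ∀ n : ℤ,
    (2 * fibZ (m + n) = fibZ m * lucZ n + lucZ m * fibZ n ∧
     2 * lucZ (m + n) = lucZ m * lucZ n + 5 * fibZ m * fibZ n) ∧
    (2 * fibZ (m + n + 1) = fibZ m * lucZ (n + 1) + lucZ m * fibZ (n + 1) ∧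
     2 * lucZ (m + n + 1) = lucZ m * lucZ (n + 1) + 5 * fibZ m * fibZ (n + 1)) := by
  have hrecm := fibZ_rec (m - 1)
  rw [show m - 1 + 2 = m + 1 from by ring, show m - 1 + 1 = m from by ring] at hrecm
  intro n
  induction n using Int.induction_on with
  | zero =>
    refine ⟨⟨?_, ?_⟩, ?_, ?_⟩
    · rw [add_zero, fibZ_zero, lucZ_zero]; ring
    · rw [add_zero, fibZ_zero, lucZ_zero]; ring
    · rw [show m + 0 + 1 = m + 1 from by ring, show (0:ℤ) + 1 = 1 from by norm_num,
          fibZ_one, lucZ_one, lucZ]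
      linear_combination hrecm
    · have h2 := fibZ_rec m
      rw [show m + 0 + 1 = m + 1 from by ring, show (0:ℤ) + 1 = 1 from by norm_num,
          fibZ_one, lucZ_one, lucZ, lucZ]
      rw [show m + 1 + 1 = m + 2 from by ring, show m + 1 - 1 = m from by ring,
          ]
      linear_combination 2 * h2 + hrecm
  | succ k ih =>
    obtain ⟨⟨ha, hb⟩, ⟨hc, hd⟩⟩ := ih
    refine ⟨⟨by convert hc using 2 <;> push_cast <;> ring,
            by convert hd using 2 <;> push_cast <;> ring⟩, ?_, ?_⟩
    · have hF := fibZ_rec (m + (k : ℤ))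
      have hL := lucZ_rec (k : ℤ)
      have hF2 := fibZ_rec (k : ℤ)
      rw [show m + ((k : ℤ) + 1) + 1 = m + (k : ℤ) + 2 from by ring,
          show ((k : ℤ) + 1) + 1 = (k : ℤ) + 2 from by ring]
      linear_combination 2 * hF + ha + hc - fibZ m * hL - lucZ m * hF2
    · have hF := lucZ_rec (m + (k : ℤ))
      have hL := lucZ_rec (k : ℤ)
      have hF2 := fibZ_rec (k : ℤ)
      rw [show m + ((k : ℤ) + 1) + 1 = m + (k : ℤ) + 2 from by ring,
          show ((k : ℤ) + 1) + 1 = (k : ℤ) + 2 from by ring]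
      linear_combination 2 * hF + hb + hd - lucZ m * hL - 5 * fibZ m * hF2
  | pred k ih =>
    obtain ⟨⟨ha, hb⟩, ⟨hc, hd⟩⟩ := ih
    refine ⟨⟨?_, ?_⟩, by convert ha using 2 <;> push_cast <;> ring,
            by convert hb using 2 <;> push_cast <;> ring⟩
    · have hF := fibZ_rec (m + (-(k : ℤ) - 1))
      have hL := lucZ_rec (-(k : ℤ) - 1)
      have hF2 := fibZ_rec (-(k : ℤ) - 1)
      rw [show m + (-(k : ℤ) - 1) + 2 = m + -(k : ℤ) + 1 from by ring,
          show m + (-(k : ℤ) - 1) + 1 = m + -(k : ℤ) from by ring] at hF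
      rw [show -(k : ℤ) - 1 + 2 = -(k : ℤ) + 1 from by ring,
          show -(k : ℤ) - 1 + 1 = -(k : ℤ) from by ring] at hL hF2
      linear_combination hc - ha - 2 * hF + fibZ m * hL + lucZ m * hF2
    · have hF := lucZ_rec (m + (-(k : ℤ) - 1))
      have hL := lucZ_rec (-(k : ℤ) - 1)
      have hF2 := fibZ_rec (-(k : ℤ) - 1)
      rw [show m + (-(k : ℤ) - 1) + 2 = m + -(k : ℤ) + 1 from by ring,
          show m + (-(k : ℤ) - 1) + 1 = m + -(k : ℤ) from by ring] at hF
      rw [show -(k : ℤ) - 1 + 2 = -(k : ℤ) + 1 from by ring,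
          show -(k : ℤ) - 1 + 1 = -(k : ℤ) from by ring] at hL hF2
      linear_combination hd - hb - 2 * hF + lucZ m * hL + 5 * fibZ m * hF2

lemma addF (m n : ℤ) : 2 * fibZ (m + n) = fibZ m * lucZ n + lucZ m * fibZ n :=
  ((add_formulas m n).1).1

lemma addL (m n : ℤ) : 2 * lucZ (m + n) = lucZ m * lucZ n + 5 * fibZ m * fibZ n :=
  ((add_formulas m n).1).2

lemma negOnePow_sq (k : ℤ) : (k.negOnePow : ℤ) * (k.negOnePow : ℤ) = 1 := by
  rw [← Units.val_mul, Int.units_mul_self, Units.val_one]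

lemma fibZ_neg (n : ℤ) : fibZ (-n) = -(n.negOnePow : ℤ) * fibZ n := by
  suffices h : ∀ k : ℕ, fibZ (-(k : ℤ)) = -(((k : ℤ)).negOnePow : ℤ) * fibZ (k : ℤ) by
    obtain ⟨k, rfl | rfl⟩ := Int.eq_nat_or_neg n
    · exact h k
    · rw [neg_neg, Int.negOnePow_neg]
      have h1 := h k
      have hε := negOnePow_sq (k : ℤ)
      linear_combination ((k : ℤ).negOnePow : ℤ) * h1 - fibZ (k : ℤ) * hε
  intro k
  rcases Nat.even_or_odd k with ⟨b, rfl⟩ | ⟨b, rfl⟩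
  · rw [fibZ_neg_coe, fibZ_coe]
    have h1 : ((-1 : ℤ)) ^ (b + b + 1) = -1 := Odd.neg_one_pow ⟨b, by ring⟩
    have h2 : ((b + b : ℕ) : ℤ).negOnePow = 1 :=
      Int.negOnePow_even _ ⟨b, by push_cast; ring⟩
    rw [h1, h2]; push_cast; ring
  · rw [fibZ_neg_coe, fibZ_coe]
    have h1 : ((-1 : ℤ)) ^ (2 * b + 1 + 1) = 1 := Even.neg_one_pow ⟨b + 1, by ring⟩
    have h2 : ((2 * b + 1 : ℕ) : ℤ).negOnePow = -1 :=
      Int.negOnePow_odd _ ⟨b, by push_cast; ring⟩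
    rw [h1, h2]; push_cast; ring

lemma lucZ_neg (n : ℤ) : lucZ (-n) = (n.negOnePow : ℤ) * lucZ n := by
  unfold lucZ
  rw [show -n + 1 = -(n - 1) from by ring, show -n - 1 = -(n + 1) from by ring,
      fibZ_neg, fibZ_neg, Int.negOnePow_sub, Int.negOnePow_add, Int.negOnePow_one]
  push_cast
  ring

lemma identI1 (m r : ℤ) :
    2 * fibZ (m + 2 * r) + 2 * (r.negOnePow : ℤ) * fibZ m = 2 * lucZ r * fibZ (m + r) := by
  have h1 := addF (m + r) r
  have h2 := addF (m + r) (-r)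
  have hε := negOnePow_sq r
  rw [show m + r + r = m + 2 * r from by ring] at h1
  rw [show m + r + -r = m from by ring, fibZ_neg, lucZ_neg] at h2
  linear_combination h1 + (r.negOnePow : ℤ) * h2 -
    (lucZ (m + r) * fibZ r - fibZ (m + r) * lucZ r) * hε

lemma identI2 (m r : ℤ) :
    4 * fibZ (m + 2 * r) =
      lucZ r ^ 2 * fibZ m + 2 * lucZ r * lucZ m * fibZ r + 5 * fibZ r ^ 2 * fibZ m := by
  have h1 := addF (m + r) r
  have h2 := addF m r
  have h3 := addL m r
  rw [show m + r + r = m + 2 * r from by ring] at h1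
  linear_combination 2 * h1 + lucZ r * h2 + fibZ r * h3

lemma lucZ_pos (k : ℕ) : 0 < lucZ (k : ℤ) := by
  cases k with
  | zero => rw [Nat.cast_zero, lucZ_zero]; norm_num
  | succ k =>
    unfold lucZ
    rw [show ((k + 1 : ℕ) : ℤ) + 1 = ((k + 2 : ℕ) : ℤ) from by push_cast; ring,
        show ((k + 1 : ℕ) : ℤ) - 1 = ((k : ℕ) : ℤ) from by push_cast; ring,
        fibZ_coe, fibZ_coe]
    have h1 : 0 < Nat.fib (k + 2) := Nat.fib_pos.mpr (by omega)
    positivity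

lemma lucZ_ne_zero (r : ℤ) : lucZ r ≠ 0 := by
  obtain ⟨k, rfl | rfl⟩ := Int.eq_nat_or_neg r
  · exact (lucZ_pos k).ne'
  · rw [lucZ_neg]
    rcases Int.units_eq_one_or ((k : ℤ)).negOnePow with h | h <;>
      simp [h, (lucZ_pos k).ne']

lemma neg_one_zpow_cast (k : ℤ) : (-1 : ℚ) ^ k = ((k.negOnePow : ℤ) : ℚ) := by
  rcases Int.even_or_odd k with h | h
  · rw [Int.negOnePow_even _ h, h.neg_one_zpow]; norm_num
  · rw [Int.negOnePow_odd _ h, h.neg_one_zpow]; norm_num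

lemma lemS (r : ℤ) (n : ℕ) :
    (∑ j ∈ Finset.range (2 * n),
        (-1 : ℚ) ^ ((j : ℤ) * (r + 1)) * (fibZ (r * (2 * (n : ℤ) - 2 * j - 1)) : ℚ))
        * (lucZ r : ℚ)
      = 2 * (fibZ (2 * r * (n : ℤ)) : ℚ) := by
  induction n with
  | zero => simp [fibZ_zero]
  | succ n ih =>
    have hε2 : ((r.negOnePow : ℤ) : ℚ) * ((r.negOnePow : ℤ) : ℚ) = 1 := by
      exact_mod_cast congrArg (Int.cast : ℤ → ℚ) (negOnePow_sq r)
    have hI1q : 2 * (fibZ (2 * r * (n : ℤ) + 2 * r) : ℚ)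
        + 2 * ((r.negOnePow : ℤ) : ℚ) * (fibZ (2 * r * (n : ℤ)) : ℚ)
        = 2 * (lucZ r : ℚ) * (fibZ (2 * r * (n : ℤ) + r) : ℚ) := by
      exact_mod_cast congrArg (Int.cast : ℤ → ℚ) (identI1 (2 * r * (n : ℤ)) r)
    rw [show 2 * (n + 1) = (2 * n + 1) + 1 from by ring, Finset.sum_range_succ',
        Finset.sum_range_succ]
    push_cast
    have hs : ∑ x ∈ range (2 * n),
          (-1 : ℚ) ^ (((x : ℤ) + 1) * (r + 1))
            * (fibZ (r * (2 * ((n : ℤ) + 1) - 2 * ((x : ℤ) + 1) - 1)) : ℚ)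
        = ∑ x ∈ range (2 * n),
          (-((r.negOnePow : ℤ) : ℚ))
            * ((-1 : ℚ) ^ ((x : ℤ) * (r + 1)) * (fibZ (r * (2 * (n : ℤ) - 2 * x - 1)) : ℚ)) := by
      refine Finset.sum_congr rfl fun x hx => ?_
      rw [show ((x : ℤ) + 1) * (r + 1) = (r + 1) + (x : ℤ) * (r + 1) from by ring,
          zpow_add₀ (by norm_num : (-1 : ℚ) ≠ 0), neg_one_zpow_cast (r + 1),
          Int.negOnePow_succ,
          show r * (2 * ((n : ℤ) + 1) - 2 * ((x : ℤ) + 1) - 1)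
            = r * (2 * (n : ℤ) - 2 * (x : ℤ) - 1) from by ring]
      push_cast
      ring
    rw [hs, ← Finset.mul_sum]
    have hlast : (-1 : ℚ) ^ ((2 * (n : ℤ) + 1) * (r + 1))
          * (fibZ (r * (2 * ((n : ℤ) + 1) - 2 * (2 * (n : ℤ) + 1) - 1)) : ℚ)
        = (fibZ (2 * r * (n : ℤ) + r) : ℚ) := by
      rw [show (2 * (n : ℤ) + 1) * (r + 1) = (r + 1) + 2 * ((n : ℤ) * (r + 1)) from by ring,
          zpow_add₀ (by norm_num : (-1 : ℚ) ≠ 0), neg_one_zpow_cast (r + 1),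
          Int.negOnePow_succ,
          Even.neg_one_zpow ⟨(n : ℤ) * (r + 1), by ring⟩,
          show r * (2 * ((n : ℤ) + 1) - 2 * (2 * (n : ℤ) + 1) - 1)
            = -(2 * r * (n : ℤ) + r) from by ring,
          fibZ_neg,
          show 2 * r * (n : ℤ) + r = 2 * (r * (n : ℤ)) + r from by ring,
          Int.negOnePow_add, Int.negOnePow_two_mul, one_mul]
      push_cast
      linear_combination (fibZ (2 * (r * (n : ℤ)) + r) : ℚ) * hε2
    rw [hlast, show ((0 : ℤ)) * (r + 1) = 0 from by ring, zpow_zero, one_mul,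
        show r * (2 * ((n : ℤ) + 1) - 0 - 1) = 2 * r * (n : ℤ) + r from by ring,
        show 2 * r * ((n : ℤ) + 1) = 2 * r * (n : ℤ) + 2 * r from by ring]
    linear_combination (-((r.negOnePow : ℤ) : ℚ)) * ih - hI1q

lemma lemR (r : ℤ) (n : ℕ) :
    ((∑ j ∈ Finset.range n,
        ((fibZ r : ℚ) / 2) ^ (2 * j) * 5 ^ j * (fibZ (r * (2 * (n : ℤ) - 2 * j - 1)) : ℚ))
      + ∑ i ∈ Finset.range n,
        ((fibZ r : ℚ) / 2) ^ (2 * i + 1) * 5 ^ i * (lucZ (r * (2 * (n : ℤ) - 2 * i - 2)) : ℚ))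
      * (lucZ r : ℚ)
    = 2 * (fibZ (2 * r * (n : ℤ)) : ℚ) := by
  induction n with
  | zero => simp [fibZ_zero]
  | succ n ih =>
    have hI2q : 4 * (fibZ (2 * r * (n : ℤ) + 2 * r) : ℚ)
        = (lucZ r : ℚ) ^ 2 * (fibZ (2 * r * (n : ℤ)) : ℚ)
          + 2 * (lucZ r : ℚ) * (lucZ (2 * r * (n : ℤ)) : ℚ) * (fibZ r : ℚ)
          + 5 * (fibZ r : ℚ) ^ 2 * (fibZ (2 * r * (n : ℤ)) : ℚ) := by
      exact_mod_cast congrArg (Int.cast : ℤ → ℚ) (identI2 (2 * r * (n : ℤ)) r)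
    have hAq : 2 * (fibZ (2 * r * (n : ℤ) + r) : ℚ)
        = (fibZ (2 * r * (n : ℤ)) : ℚ) * (lucZ r : ℚ)
          + (lucZ (2 * r * (n : ℤ)) : ℚ) * (fibZ r : ℚ) := by
      exact_mod_cast congrArg (Int.cast : ℤ → ℚ) (addF (2 * r * (n : ℤ)) r)
    rw [Finset.sum_range_succ', Finset.sum_range_succ']
    push_cast
    have hs1 : ∑ x ∈ range n,
          ((fibZ r : ℚ) / 2) ^ (2 * (x + 1)) * 5 ^ (x + 1)
            * (fibZ (r * (2 * ((n : ℤ) + 1) - 2 * ((x : ℤ) + 1) - 1)) : ℚ)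
        = ∑ x ∈ range n,
          (5 * ((fibZ r : ℚ) / 2) ^ 2)
            * (((fibZ r : ℚ) / 2) ^ (2 * x) * 5 ^ x
                * (fibZ (r * (2 * (n : ℤ) - 2 * x - 1)) : ℚ)) := by
      refine Finset.sum_congr rfl fun x hx => ?_
      rw [show r * (2 * ((n : ℤ) + 1) - 2 * ((x : ℤ) + 1) - 1)
            = r * (2 * (n : ℤ) - 2 * (x : ℤ) - 1) from by ring]
      ring
    have hs2 : ∑ x ∈ range n,
          ((fibZ r : ℚ) / 2) ^ (2 * (x + 1) + 1) * 5 ^ (x + 1)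
            * (lucZ (r * (2 * ((n : ℤ) + 1) - 2 * ((x : ℤ) + 1) - 2)) : ℚ)
        = ∑ x ∈ range n,
          (5 * ((fibZ r : ℚ) / 2) ^ 2)
            * (((fibZ r : ℚ) / 2) ^ (2 * x + 1) * 5 ^ x
                * (lucZ (r * (2 * (n : ℤ) - 2 * x - 2)) : ℚ)) := by
      refine Finset.sum_congr rfl fun x hx => ?_
      rw [show r * (2 * ((n : ℤ) + 1) - 2 * ((x : ℤ) + 1) - 2)
            = r * (2 * (n : ℤ) - 2 * (x : ℤ) - 2) from by ring]
      ring
    rw [hs1, hs2, ← Finset.mul_sum, ← Finset.mul_sum,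
        show r * (2 * ((n : ℤ) + 1) - 0 - 1) = 2 * r * (n : ℤ) + r from by ring,
        show r * (2 * ((n : ℤ) + 1) - 0 - 2) = 2 * r * (n : ℤ) from by ring,
        show 2 * r * ((n : ℤ) + 1) = 2 * r * (n : ℤ) + 2 * r from by ring]
    linear_combination (5 * ((fibZ r : ℚ) / 2) ^ 2) * ih - (1 / 2) * hI2q
      + ((lucZ r : ℚ) / 2) * hAq

lemma sum_Icc_one (f : ℕ → ℚ) (n : ℕ) :
    ∑ j ∈ Finset.Icc 1 n, f j = ∑ i ∈ Finset.range n, f (i + 1) := by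
  induction n with
  | zero => simp
  | succ n ih => rw [Finset.sum_Icc_succ_top (by omega), ih, Finset.sum_range_succ]

theorem thm2_fib_even_sum (r : ℤ) (n : ℕ) :
    (∑ j ∈ Finset.range (2 * n),
        (-1 : ℚ) ^ ((j : ℤ) * (r + 1)) * (fibZ (r * (2 * (n : ℤ) - 2 * j - 1)) : ℚ)
      = (∑ j ∈ Finset.range n,
          ((fibZ r : ℚ) / 2) ^ (2 * j) * 5 ^ j
            * (fibZ (r * (2 * (n : ℤ) - 2 * j - 1)) : ℚ))
        + ∑ j ∈ Finset.Icc 1 n,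
          ((fibZ r : ℚ) / 2) ^ (2 * j - 1) * 5 ^ (j - 1)
            * (lucZ (r * (2 * (n : ℤ) - 2 * j)) : ℚ)) ∧
    (∑ j ∈ Finset.range (2 * n),
        (-1 : ℚ) ^ ((j : ℤ) * (r + 1)) * (fibZ (r * (2 * (n : ℤ) - 2 * j - 1)) : ℚ)
      = 2 * (fibZ (2 * r * (n : ℤ)) : ℚ) / (lucZ r : ℚ)) := by
  have hL : (lucZ r : ℚ) ≠ 0 := Int.cast_ne_zero.mpr (lucZ_ne_zero r)
  have h1 := lemS r n
  have h2 := lemR r n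
  have hIcc : (∑ j ∈ Finset.Icc 1 n,
        ((fibZ r : ℚ) / 2) ^ (2 * j - 1) * 5 ^ (j - 1)
          * (lucZ (r * (2 * (n : ℤ) - 2 * j)) : ℚ))
      = ∑ i ∈ Finset.range n,
        ((fibZ r : ℚ) / 2) ^ (2 * i + 1) * 5 ^ i
          * (lucZ (r * (2 * (n : ℤ) - 2 * i - 2)) : ℚ) := by
    rw [sum_Icc_one]
    refine Finset.sum_congr rfl fun i hi => ?_
    have e1 : 2 * (i + 1) - 1 = 2 * i + 1 := by omega
    have e2 : (i + 1) - 1 = i := by omega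
    rw [e1, e2, show r * (2 * (n : ℤ) - 2 * ((i + 1 : ℕ) : ℤ))
          = r * (2 * (n : ℤ) - 2 * (i : ℤ) - 2) from by push_cast; ring]
  constructor
  · rw [hIcc]
    exact mul_right_cancel₀ hL (h1.trans h2.symm)
  · rw [eq_div_iff hL]
    exact h1
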